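/- Let u, v, w be words over {1,...,n} and let y be the least letter occurring in w. Suppose the number of occurrences of y in w is at least the length of v, and every letter x of v and every letter z of u satisfy x < y ≤ z. Then for all 1 ≤ p ≤ q ≤ n, the maximum length of a weakly increasing subsequence with entries in [p,q] is the same in the word wuv as in the word wvu. -/

import Mathlib

/-- The maximum length of a weakly increasing subsequence of `w` all of whose
letters lie in the interval `[p, q]`. -/
def wis (w : List ℕ) (p q : ℕ) : ℕ :=
  ((w.sublists.filter (fun s => decide (s.Pairwise (· ≤ ·) ∧ ∀ a ∈ s, p ≤ a ∧ a ≤ q))).map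
    List.length).foldr max 0

lemma mem_le_foldr_max {a : ℕ} : ∀ {l : List ℕ}, a ∈ l → a ≤ l.foldr max 0
  | b :: l, h => by
    rcases List.mem_cons.1 h with rfl | h
    · exact le_max_left _ _
    · exact le_trans (mem_le_foldr_max h) (le_max_right _ _)

lemma foldr_max_eq_zero_or_mem : ∀ (l : List ℕ), l.foldr max 0 = 0 ∨ l.foldr max 0 ∈ l
  | [] => Or.inl rfl
  | a :: l => by
    simp only [List.foldr_cons]
    rcases le_total a (l.foldr max 0) with h | h
    · rw [max_eq_right h]
      rcases foldr_max_eq_zero_or_mem l with h0 | hm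
      · exact Or.inl h0
      · exact Or.inr (List.mem_cons_of_mem _ hm)
    · rw [max_eq_left h]
      exact Or.inr List.mem_cons_self

lemma le_wis {s w : List ℕ} {p q : ℕ} (hs : s.Sublist w) (h1 : s.Pairwise (· ≤ ·))
    (h2 : ∀ a ∈ s, p ≤ a ∧ a ≤ q) : s.length ≤ wis w p q := by
  apply mem_le_foldr_max
  apply List.mem_map_of_mem
  rw [List.mem_filter]
  exact ⟨List.mem_sublists.2 hs, by simpa using ⟨h1, h2⟩⟩

lemma exists_wis (w : List ℕ) (p q : ℕ) :
    ∃ s : List ℕ, s.Sublist w ∧ s.Pairwise (· ≤ ·) ∧ (∀ a ∈ s, p ≤ a ∧ a ≤ q) ∧ s.length = wis w p q := by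
  unfold wis
  rcases foldr_max_eq_zero_or_mem ((w.sublists.filter
      (fun s => decide (List.Pairwise (· ≤ ·) s ∧ ∀ a ∈ s, p ≤ a ∧ a ≤ q))).map List.length) with h | h
  · rw [h]
    exact ⟨[], List.nil_sublist w, List.Pairwise.nil, by simp, rfl⟩
  · obtain ⟨s, hsf, hlen⟩ := List.mem_map.1 h
    rw [List.mem_filter] at hsf
    have hd := of_decide_eq_true hsf.2
    exact ⟨s, List.mem_sublists.1 hsf.1, hd.1, hd.2, hlen⟩

lemma replicate_sublist_of_count {y : ℕ} : ∀ {w : List ℕ} {k : ℕ},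
    k ≤ w.count y → (List.replicate k y).Sublist w := by
  intro w
  induction w with
  | nil => intro k h; simp at h; simp [h]
  | cons a w ih =>
    intro k h
    by_cases hay : a = y
    · subst hay
      cases k with
      | zero => exact List.nil_sublist _
      | succ k =>
        rw [List.count_cons_self] at h
        rw [List.replicate_succ]
        exact (ih (Nat.le_of_succ_le_succ h)).cons₂ a
    · rw [List.count_cons_of_ne hay] at h
      exact (ih h).cons a

theorem stmt6 (n : ℕ) (u v w : List ℕ) (y : ℕ)
    (hu : ∀ a ∈ u, 1 ≤ a ∧ a ≤ n) (hv : ∀ a ∈ v, 1 ≤ a ∧ a ≤ n)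
    (hw : ∀ a ∈ w, 1 ≤ a ∧ a ≤ n)
    (hyw : y ∈ w) (hymin : ∀ a ∈ w, y ≤ a)
    (hcount : v.length ≤ w.count y)
    (hxz : ∀ x ∈ v, ∀ z ∈ u, x < y ∧ y ≤ z)
    (p q : ℕ) (hp : 1 ≤ p) (hpq : p ≤ q) (hq : q ≤ n) :
    wis (w ++ u ++ v) p q = wis (w ++ v ++ u) p q := by
  apply le_antisymm
  · obtain ⟨s, hsub, hsort, hrange, hlen⟩ := exists_wis (w ++ u ++ v) p q
    rw [← hlen]
    obtain ⟨s12, s3, rfl, h12, h3⟩ := List.sublist_append_iff.1 hsub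
    obtain ⟨s1, s2, rfl, h1, h2⟩ := List.sublist_append_iff.1 h12
    by_cases hs3 : s3 = []
    · subst hs3
      apply le_wis _ hsort hrange
      rw [List.append_nil]
      exact (h1.trans (w.sublist_append_left v)).append h2
    · by_cases hs2 : s2 = []
      · subst hs2
        apply le_wis _ hsort hrange
        rw [List.append_nil]
        exact (h1.append h3).trans (List.sublist_append_left _ u)
      · exfalso
        obtain ⟨b, hb⟩ := List.exists_mem_of_ne_nil s2 hs2
        obtain ⟨c, hc⟩ := List.exists_mem_of_ne_nil s3 hs3
        have hbu : b ∈ u := h2.subset hb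
        have hcv : c ∈ v := h3.subset hc
        have hxz' := hxz c hcv b hbu
        have hbc : b ≤ c :=
          (List.pairwise_append.1 hsort).2.2 b (List.mem_append_right _ hb) c hc
        omega
  · obtain ⟨s, hsub, hsort, hrange, hlen⟩ := exists_wis (w ++ v ++ u) p q
    rw [← hlen]
    obtain ⟨s12, s3, rfl, h12, h3⟩ := List.sublist_append_iff.1 hsub
    obtain ⟨s1, s2, rfl, h1, h2⟩ := List.sublist_append_iff.1 h12
    by_cases hs2 : s2 = []
    · subst hs2
      apply le_wis _ hsort hrange
      rw [List.append_nil]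
      exact (h1.append h3).trans (List.sublist_append_left _ v)
    · by_cases hs3 : s3 = []
      · subst hs3
        apply le_wis _ hsort hrange
        rw [List.append_nil]
        exact (h1.trans (w.sublist_append_left u)).append h2
      · obtain ⟨b, hb⟩ := List.exists_mem_of_ne_nil s2 hs2
        obtain ⟨c, hc⟩ := List.exists_mem_of_ne_nil s3 hs3
        have hbv : b ∈ v := h2.subset hb
        have hcu : c ∈ u := h3.subset hc
        have hby : b < y := (hxz b hbv c hcu).1
        have hyc : y ≤ c := (hxz b hbv c hcu).2
        have hs1 : s1 = [] := by
          by_contra hne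
          obtain ⟨a, ha⟩ := List.exists_mem_of_ne_nil s1 hne
          have hya : y ≤ a := hymin a (h1.subset ha)
          have hab : a ≤ b :=
            (List.pairwise_append.1 (List.pairwise_append.1 hsort).1).2.2 a ha b hb
          omega
        subst hs1
        have hpy : p ≤ y := le_trans (hrange b (by simp [hb])).1 hby.le
        have hyq : y ≤ q := le_trans hyc (hrange c (by simp [hc])).2
        have hrep : (List.replicate s2.length y).Sublist w :=
          replicate_sublist_of_count (le_trans h2.length_le hcount)
        have ht : (List.replicate s2.length y ++ s3).Sublist ((w ++ u) ++ v) :=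
          (hrep.append h3).trans (List.sublist_append_left _ v)
        have hsort3 : s3.Pairwise (· ≤ ·) := (List.pairwise_append.1 hsort).2.1
        have hsort' : (List.replicate s2.length y ++ s3).Pairwise (· ≤ ·) := by
          rw [List.pairwise_append]
          refine ⟨List.pairwise_replicate.2 (Or.inr le_rfl), hsort3, fun a ha b' hb' => ?_⟩
          rw [List.eq_of_mem_replicate ha]
          exact (hxz b hbv b' (h3.subset hb')).2
        have hrange' : ∀ a ∈ List.replicate s2.length y ++ s3, p ≤ a ∧ a ≤ q := by
          intro a ha
          rcases List.mem_append.1 ha with h | h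
          · rw [List.eq_of_mem_replicate h]; exact ⟨hpy, hyq⟩
          · exact hrange a (by simp [h])
        calc (([] ++ s2) ++ s3).length = (List.replicate s2.length y ++ s3).length := by simp
          _ ≤ wis ((w ++ u) ++ v) p q := le_wis ht hsort' hrange'
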